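/- For each vertex i of a noncrossing tree on n ≥ 2 vertices, let f(i) denote the first neighbor of i encountered moving counterclockwise from i. Then iterating f starting from any vertex eventually reaches a pair {i, j} with f(i)=j and f(j)=i, and this pair is a primary edge. -/

import Mathlib

/-- No two edges cross when the vertices are placed in increasing clockwise order. -/
def Noncrossing {n : ℕ} (G : SimpleGraph (Fin n)) : Prop :=
  ∀ i j k l : Fin n, i < j → j < k → k < l → G.Adj i k → ¬ G.Adj j l

/-- An edge `{i,j}` with `i < j` is primary iff `i` has no edge to `{j+1,…,n,1,…,i-1}`
and `j` has no edge to `{i+1,…,j-1}`. -/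
def IsPrimaryEdge {n : ℕ} (G : SimpleGraph (Fin n)) (i j : Fin n) : Prop :=
  i < j ∧ G.Adj i j ∧ (∀ k : Fin n, (k < i ∨ j < k) → ¬ G.Adj i k) ∧
    (∀ k : Fin n, i < k → k < j → ¬ G.Adj j k)

/-- The counterclockwise distance from `i` to `k` on the circle `0,…,n-1`
(the vertices being placed in clockwise order). -/
def ccwDist (n : ℕ) (i k : Fin n) : ℕ := (i.val + n - k.val) % n

/-- Auxiliary walk along iterates of `f`. -/
def chainW {n : ℕ} (G : SimpleGraph (Fin n)) (f : Fin n → Fin n)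
    (hadj : ∀ i : Fin n, G.Adj i (f i)) (x : Fin n) :
    (t : ℕ) → G.Walk x (f^[t] x)
  | 0 => SimpleGraph.Walk.nil
  | (t+1) => ((chainW G f hadj x t).concat (hadj (f^[t] x))).copy rfl
      (Function.iterate_succ_apply' f t x).symm

lemma chainW_support {n : ℕ} (G : SimpleGraph (Fin n)) (f : Fin n → Fin n)
    (hadj : ∀ i : Fin n, G.Adj i (f i)) (x : Fin n) (t : ℕ) :
    (chainW G f hadj x t).support = (List.range (t+1)).map (fun i => f^[i] x) := by
  induction t with
  | zero => simp [chainW]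
  | succ t ih =>
      simp only [chainW]
      rw [SimpleGraph.Walk.support_copy, SimpleGraph.Walk.support_concat, ih]
      simp [List.range_succ, Function.iterate_succ_apply']

lemma chainW_length {n : ℕ} (G : SimpleGraph (Fin n)) (f : Fin n → Fin n)
    (hadj : ∀ i : Fin n, G.Adj i (f i)) (x : Fin n) (t : ℕ) :
    (chainW G f hadj x t).length = t := by
  induction t with
  | zero => simp [chainW]
  | succ t ih => simp only [chainW]; rw [SimpleGraph.Walk.length_copy, SimpleGraph.Walk.length_concat, ih]

lemma primary_of {n : ℕ} (G : SimpleGraph (Fin n))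
    (f : Fin n → Fin n)
    (hadj : ∀ i : Fin n, G.Adj i (f i))
    (hfirst : ∀ i k : Fin n, G.Adj i k → ccwDist n i (f i) ≤ ccwDist n i k)
    (a b : Fin n) (hab : a < b) (h1 : f a = b) (h2 : f b = a) :
    IsPrimaryEdge G a b := by
  have hbn : (b : ℕ) < n := b.isLt
  have han : (a : ℕ) < n := a.isLt
  have habv : (a : ℕ) < (b : ℕ) := hab
  refine ⟨hab, h1 ▸ hadj a, ?_, ?_⟩
  · intro k hk hadjk
    have hle := hfirst a k hadjk
    rw [h1] at hle
    have hkn : (k : ℕ) < n := k.isLt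
    have hab' : ccwDist n a b = (a : ℕ) + n - (b : ℕ) := by
      unfold ccwDist; exact Nat.mod_eq_of_lt (by omega)
    rcases hk with hk | hk
    · have hkv : (k : ℕ) < (a : ℕ) := hk
      have : ccwDist n a k = (a : ℕ) - (k : ℕ) := by
        unfold ccwDist
        have h3 : (a : ℕ) + n - (k : ℕ) = ((a : ℕ) - (k : ℕ)) + n := by omega
        rw [h3, Nat.add_mod_right]
        exact Nat.mod_eq_of_lt (by omega)
      omega
    · have hkv : (b : ℕ) < (k : ℕ) := hk
      have : ccwDist n a k = (a : ℕ) + n - (k : ℕ) := by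
        unfold ccwDist; exact Nat.mod_eq_of_lt (by omega)
      omega
  · intro k hk1 hk2 hadjk
    have hle := hfirst b k hadjk
    rw [h2] at hle
    have hkn : (k : ℕ) < n := k.isLt
    have hk1v : (a : ℕ) < (k : ℕ) := hk1
    have hk2v : (k : ℕ) < (b : ℕ) := hk2
    have hba : ccwDist n b a = (b : ℕ) - (a : ℕ) := by
      unfold ccwDist
      have h3 : (b : ℕ) + n - (a : ℕ) = ((b : ℕ) - (a : ℕ)) + n := by omega
      rw [h3, Nat.add_mod_right]
      exact Nat.mod_eq_of_lt (by omega)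
    have : ccwDist n b k = (b : ℕ) - (k : ℕ) := by
      unfold ccwDist
      have h3 : (b : ℕ) + n - (k : ℕ) = ((b : ℕ) - (k : ℕ)) + n := by omega
      rw [h3, Nat.add_mod_right]
      exact Nat.mod_eq_of_lt (by omega)
    omega

/-- If `f i` is the first neighbor of `i` encountered moving counterclockwise from `i`
in a noncrossing tree on `n ≥ 2` vertices, then iterating `f` from any vertex eventually
reaches a pair `{i, j}` with `f i = j` and `f j = i`, and this pair is a primary edge. -/
theorem iterate_first_ccw_neighbor_reaches_primary_edge (n : ℕ) (hn : 2 ≤ n)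
    (G : SimpleGraph (Fin n)) (hT : G.IsTree) (hNC : Noncrossing G)
    (f : Fin n → Fin n)
    (hadj : ∀ i : Fin n, G.Adj i (f i))
    (hfirst : ∀ i k : Fin n, G.Adj i k → ccwDist n i (f i) ≤ ccwDist n i k) :
    ∀ v : Fin n, ∃ m : ℕ,
      f (f (f^[m] v)) = f^[m] v ∧
      (IsPrimaryEdge G (f^[m] v) (f (f^[m] v)) ∨
        IsPrimaryEdge G (f (f^[m] v)) (f^[m] v)) := by
  intro v
  -- find a repeat in the orbit
  obtain ⟨a, b, hab, heq⟩ := Finite.exists_ne_map_eq_of_infinite (fun m : ℕ => f^[m] v)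
  wlog hlt : a < b generalizing a b
  · exact this b a hab.symm heq.symm (by omega)
  set x := f^[a] v with hxdef
  have hx : f^[b - a] x = x := by
    have : f^[(b - a) + a] v = f^[b - a] (f^[a] v) := Function.iterate_add_apply f _ _ v
    rw [show (b - a) + a = b by omega] at this
    simp only [hxdef]
    rw [← this, ← heq]
  have hex : ∃ q, 0 < q ∧ f^[q] x = x := ⟨b - a, by omega, hx⟩
  set p := Nat.find hex with hpdef
  obtain ⟨hp0, hpx⟩ := Nat.find_spec hex
  rw [← hpdef] at hp0 hpx
  have hpmin : ∀ q, q < p → ¬(0 < q ∧ f^[q] x = x) := fun q hq => Nat.find_min hex hq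
  -- p cannot be 1
  have hp1 : p ≠ 1 := by
    intro h
    rw [h] at hpx
    exact (hadj x).ne (by simpa using hpx.symm)
  -- p cannot be ≥ 3
  have hp2 : p ≤ 2 := by
    by_contra hp3
    push_neg at hp3
    -- build a path from f x to x of length p - 1
    have he : f^[p-1] (f x) = x := by
      rw [← Function.iterate_succ_apply, show (p-1).succ = p by omega]
      exact hpx
    have hneq : ∀ i j, i < p → j < p → f^[i] (f x) = f^[j] (f x) → i = j := by
      have key : ∀ i j, i < j → j < p → f^[i] (f x) ≠ f^[j] (f x) := by
        intro i j hij hjp hfeq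
        have h1 : f^[(p-1-j)] (f^[j] (f x)) = x := by
          rw [← Function.iterate_add_apply, ← Function.iterate_succ_apply,
            show ((p-1-j) + j).succ = p by omega]
          exact hpx
        have h2 : f^[(p-1-j)] (f^[i] (f x)) = f^[p-1-j+i+1] x := by
          rw [← Function.iterate_add_apply, ← Function.iterate_succ_apply]
        rw [hfeq, h1] at h2
        exact hpmin (p-1-j+i+1) (by omega) ⟨by omega, h2.symm⟩
      intro i j hip hjp hfeq
      rcases lt_trichotomy i j with h | h | h
      · exact absurd hfeq (key i j h hjp)
      · exact h
      · exact absurd hfeq.symm (key j i h hip)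
    let P1 : G.Walk (f x) x := (chainW G f hadj (f x) (p-1)).copy rfl he
    have hP1 : P1.IsPath := by
      rw [SimpleGraph.Walk.isPath_def]
      show ((chainW G f hadj (f x) (p-1)).copy rfl he).support.Nodup
      rw [SimpleGraph.Walk.support_copy, chainW_support, show p - 1 + 1 = p by omega]
      refine List.Nodup.map_on ?_ List.nodup_range
      intro i hi j hj hfeq
      exact hneq i j (List.mem_range.mp hi) (List.mem_range.mp hj) hfeq
    let P2 : G.Walk (f x) x := SimpleGraph.Walk.cons (hadj x).symm SimpleGraph.Walk.nil
    have hP2 : P2.IsPath := by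
      rw [SimpleGraph.Walk.isPath_def]
      simp [P2, (hadj x).ne']
    have := hT.IsAcyclic.path_unique ⟨P1, hP1⟩ ⟨P2, hP2⟩
    have hlen : P1.length = P2.length :=
      congrArg (fun q : G.Path (f x) x => q.val.length) this
    have hl1 : P1.length = p - 1 := by
      simp only [P1, SimpleGraph.Walk.length_copy, chainW_length]
    have hl2 : P2.length = 1 := by simp [P2]
    omega
  have hpeq : p = 2 := by omega
  rw [hpeq] at hpx
  have hffx : f (f x) = x := by
    rw [show (2:ℕ) = 1 + 1 from rfl, Function.iterate_add_apply] at hpx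
    simpa using hpx
  refine ⟨a, hffx, ?_⟩
  rcases lt_trichotomy x (f x) with h | h | h
  · exact Or.inl (primary_of G f hadj hfirst x (f x) h rfl hffx)
  · exact absurd h.symm (hadj x).ne'
  · exact Or.inr (primary_of G f hadj hfirst (f x) x h hffx rfl)
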